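/- (Gyroscopic coefficients in the axially symmetric case C2.) Let n ≥ 3, m, R, J₁, J_n > 0, a ∈ ℝ, and set c := m a / (R (J₁ + J_n + m a²)). Define for s ∈ ℝ^{n−1}: K_{kl}(s) := (1/R²) ( (J₁ + J_n + m a²) δ_{kl} + m s_k s_l ) and C_{ij}^k(s) := −c ( s_i δ_j^k − s_j δ_i^k ), for 1 ≤ i, j, k, l ≤ n−1. Then for every s ∈ ℝ^{n−1} and all 1 ≤ i, j, l ≤ n−1: Σ_{k=1}^{n−1} K_{kl}(s) C_{ij}^k(s) = (m a / R³) ( s_j δ_{il} − s_i δ_{jl} ). (Since the matrix (K_{kl}(s)) is invertible, this identifies C_{ij}^k as the gyroscopic coefficients of the reduced system, determined by equation C_{ij}^k = Σ_l K^{kl} ⟨[hor(∂/∂s_i), hor(∂/∂s_j)], hor(∂/∂s_l)⟩.) -/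
import Mathlib


/-- gyroscopic coefficients in the axially symmetric case C2.  With
`c = m a / (R (J₁ + J_n + m a²))`, the reduced metric
`K_{kl}(s) = (1/R²)((J₁+J_n+ma²) δ_{kl} + m s_k s_l)` and the coefficients
`C_{ij}^k(s) = −c (s_i δ_j^k − s_j δ_i^k)` satisfy
`Σ_k K_{kl}(s) C_{ij}^k(s) = (m a / R³)(s_j δ_{il} − s_i δ_{jl})`. -/
theorem gyroscopic_coefficients_axially_symmetric
    (n : ℕ) (hn : 3 ≤ n)
    (m R J₁ Jn a c : ℝ) (hm : 0 < m) (hR : 0 < R) (hJ₁ : 0 < J₁) (hJn : 0 < Jn)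
    (hc : c = m * a / (R * (J₁ + Jn + m * a^2)))
    (K : (Fin (n-1) → ℝ) → Fin (n-1) → Fin (n-1) → ℝ)
    (hK : ∀ s k l, K s k l =
      (1/R^2) * ((J₁ + Jn + m * a^2) * (if k = l then 1 else 0) + m * s k * s l))
    (C : Fin (n-1) → Fin (n-1) → Fin (n-1) → (Fin (n-1) → ℝ) → ℝ)
    (hC : ∀ i j k s, C i j k s =
      -c * (s i * (if j = k then 1 else 0) - s j * (if i = k then 1 else 0))) :
    ∀ (s : Fin (n-1) → ℝ) (i j l : Fin (n-1)),
      (∑ k, K s k l * C i j k s)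
        = (m * a / R^3) *
            (s j * (if i = l then 1 else 0) - s i * (if j = l then 1 else 0)) := by
  intro s i j l
  have hA : (0:ℝ) < J₁ + Jn + m * a^2 := by positivity
  have hA' : J₁ + Jn + m * a^2 ≠ 0 := ne_of_gt hA
  have hR' : R ≠ 0 := ne_of_gt hR
  have key : ∀ k, K s k l * C i j k s =
      (-c * s i) * (if j = k then K s k l else 0)
        + (c * s j) * (if i = k then K s k l else 0) := by
    intro k
    rw [hC]
    split_ifs <;> ring
  rw [Finset.sum_congr rfl (fun k _ => key k), Finset.sum_add_distrib,
    ← Finset.mul_sum, ← Finset.mul_sum, Finset.sum_ite_eq, Finset.sum_ite_eq]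
  simp only [Finset.mem_univ, if_true, hK, hc]
  split_ifs with h1 h2 h2 <;> field_simp <;> ring
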